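/- Let G be a group with trivial center, φ an automorphism of G, and H the subgroup of Aut(G) generated by all inner automorphisms of G together with φ. Then two elements g, h ∈ G are φ-twisted conjugate if and only if there exists ψ ∈ H such that ψ ∘ ((conjugation by g) ∘ φ) ∘ ψ⁻¹ = (conjugation by h) ∘ φ. -/

import Mathlib

/-- Two elements `g h` of a group `G` are `φ`-twisted conjugate if there is `x : G`
with `h = x * g * (φ x)⁻¹`. -/
def TwistedConj {G : Type*} [Group G] (φ : G ≃* G) (g h : G) : Prop :=
  ∃ x : G, h = x * g * (φ x)⁻¹

section Aux

variable {G : Type*} [Group G]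

lemma tc_trans (φ : MulAut G) {g h k : G} (h1 : TwistedConj φ g h) (h2 : TwistedConj φ h k) :
    TwistedConj φ g k := by
  obtain ⟨x, rfl⟩ := h1
  obtain ⟨y, rfl⟩ := h2
  exact ⟨y * x, by simp [mul_assoc]⟩

lemma tc_symm (φ : MulAut G) {g h : G} (hgh : TwistedConj φ g h) : TwistedConj φ h g := by
  obtain ⟨x, rfl⟩ := hgh
  refine ⟨x⁻¹, ?_⟩
  simp [mul_assoc]

lemma tc_apply (φ : MulAut G) (g : G) : TwistedConj φ g (φ g) :=
  ⟨g⁻¹, by simp [mul_assoc]⟩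

lemma tc_zpow (φ : MulAut G) (g : G) : ∀ n : ℤ, TwistedConj φ g ((φ ^ n) g) := by
  intro n
  induction n using Int.induction_on with
  | zero => exact ⟨1, by simp⟩
  | succ n ih =>
      have e : (φ ^ ((n : ℤ) + 1)) g = φ ((φ ^ (n : ℤ)) g) := by
        rw [add_comm, zpow_add, zpow_one]; rfl
      rw [e]
      exact tc_trans φ ih (tc_apply φ _)
  | pred n ih =>
      have e : φ ((φ ^ (-(n : ℤ) - 1)) g) = (φ ^ (-(n : ℤ))) g := by
        have e2 : (φ ^ (-(n : ℤ))) g = (φ ^ (1 : ℤ) * φ ^ (-(n : ℤ) - 1)) g := by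
          rw [← zpow_add]; norm_num
        rw [e2]; rfl
      have step : TwistedConj φ ((φ ^ (-(n : ℤ) - 1)) g) ((φ ^ (-(n : ℤ))) g) := by
        rw [← e]; exact tc_apply φ _
      exact tc_trans φ ih (tc_symm φ step)

lemma conj_comm_aut (ψ : MulAut G) (y : G) :
    ψ * MulAut.conj y = MulAut.conj (ψ y) * ψ := by
  ext a
  simp [MulAut.conj]

lemma conj_inj (hZ : Subgroup.center G = ⊥) {a b : G}
    (hab : (MulAut.conj a : MulAut G) = MulAut.conj b) : a = b := by
  have h : b⁻¹ * a ∈ Subgroup.center G := by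
    rw [Subgroup.mem_center_iff]
    intro y
    have h1 : a * y * a⁻¹ = b * y * b⁻¹ := by
      have := congrArg (fun f : MulAut G => f y) hab
      simpa [MulAut.conj_apply] using this
    have h2 : b⁻¹ * a * y * a⁻¹ * b = y := by
      rw [show b⁻¹ * a * y * a⁻¹ * b = b⁻¹ * (a * y * a⁻¹) * b by group, h1]; group
    calc y * (b⁻¹ * a) = (b⁻¹ * a * y * a⁻¹ * b) * (b⁻¹ * a) := by rw [h2]
      _ = b⁻¹ * a * y := by group
  rw [hZ, Subgroup.mem_bot] at h
  exact (inv_mul_eq_one.mp h).symm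

end Aux

/-- Let `G` have trivial center and let `H ≤ Aut(G)` be the subgroup generated by the
inner automorphisms together with `φ`. Then `g` and `h` are `φ`-twisted conjugate if
and only if `(conj g) ∘ φ` and `(conj h) ∘ φ` are conjugate by an element of `H`. -/
theorem twistedConj_iff_conj_in_aut {G : Type*} [Group G]
    (hZ : Subgroup.center G = ⊥) (φ : MulAut G)
    (H : Subgroup (MulAut G))
    (hH : H = Subgroup.closure (Set.range (MulAut.conj : G →* MulAut G) ∪ {φ}))
    (g h : G) :
    TwistedConj φ g h ↔
      ∃ ψ ∈ H, ψ * (MulAut.conj g * φ) * ψ⁻¹ = MulAut.conj h * φ := by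
  subst hH
  constructor
  · rintro ⟨x, rfl⟩
    refine ⟨MulAut.conj x, Subgroup.subset_closure (Or.inl ⟨x, rfl⟩), ?_⟩
    rw [← map_inv]
    ext a
    simp [MulAut.mul_apply, MulAut.conj_apply, map_mul, map_inv, mul_assoc]
  · rintro ⟨ψ, hψ, heq⟩
    have key : ∀ ρ ∈ Subgroup.closure (Set.range (MulAut.conj : G →* MulAut G) ∪ {φ}),
        ∃ x : G, ∃ n : ℤ, ρ = MulAut.conj x * φ ^ n := by
      intro ρ₀ hρ₀
      induction hρ₀ using Subgroup.closure_induction with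
      | mem ρ hρ =>
          rcases hρ with ⟨x, rfl⟩ | hρ
          · exact ⟨x, 0, by simp⟩
          · exact ⟨1, 1, by simp [Set.mem_singleton_iff.mp hρ]⟩
      | one => exact ⟨1, 0, by simp⟩
      | mul ρ σ _ _ ihρ ihσ =>
          obtain ⟨x, m, rfl⟩ := ihρ
          obtain ⟨y, n, rfl⟩ := ihσ
          refine ⟨x * (φ ^ m) y, m + n, ?_⟩
          rw [map_mul, mul_assoc (MulAut.conj x), ← mul_assoc (φ ^ m), conj_comm_aut,
            zpow_add]
          group
      | inv ρ _ ihρ =>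
          obtain ⟨x, m, rfl⟩ := ihρ
          refine ⟨(φ ^ (-m)) x⁻¹, -m, ?_⟩
          rw [mul_inv_rev, ← map_inv, ← conj_comm_aut, zpow_neg]
    obtain ⟨x, n, rfl⟩ := key ψ hψ
    have h1 := conj_comm_aut (φ ^ n) g
    have h2 := conj_comm_aut φ x⁻¹
    have hc : φ ^ n * φ * (φ ^ n)⁻¹ = φ := by group
    have lhs : MulAut.conj x * φ ^ n * (MulAut.conj g * φ) * (MulAut.conj x * φ ^ n)⁻¹
        = MulAut.conj (x * (φ ^ n) g * (φ x)⁻¹) * φ := by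
      calc MulAut.conj x * φ ^ n * (MulAut.conj g * φ) * (MulAut.conj x * φ ^ n)⁻¹
          = MulAut.conj x * (φ ^ n * MulAut.conj g) * φ * (φ ^ n)⁻¹ * (MulAut.conj x)⁻¹ := by
            group
        _ = MulAut.conj x * (MulAut.conj ((φ ^ n) g) * φ ^ n) * φ * (φ ^ n)⁻¹ *
              (MulAut.conj x)⁻¹ := by rw [h1]
        _ = MulAut.conj x * MulAut.conj ((φ ^ n) g) * (φ ^ n * φ * (φ ^ n)⁻¹) *
              (MulAut.conj x)⁻¹ := by group
        _ = MulAut.conj x * MulAut.conj ((φ ^ n) g) * (φ * MulAut.conj x⁻¹) := by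
              rw [hc, ← map_inv]; group
        _ = MulAut.conj x * MulAut.conj ((φ ^ n) g) * (MulAut.conj (φ x⁻¹) * φ) := by rw [h2]
        _ = MulAut.conj (x * (φ ^ n) g * (φ x)⁻¹) * φ := by
              rw [map_mul, map_mul, map_inv, map_inv]; group
    rw [lhs] at heq
    have hconj : (MulAut.conj (x * (φ ^ n) g * (φ x)⁻¹) : MulAut G) = MulAut.conj h :=
      mul_right_cancel heq
    have hfin : h = x * (φ ^ n) g * (φ x)⁻¹ := (conj_inj hZ hconj).symm
    exact tc_trans φ (tc_zpow φ g n) ⟨x, hfin⟩
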